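/- arXiv:math/0701257 — 3 statements merged into one kernel-verified Lean document; each statement's English description precedes it below -/
import Mathlib

section
/- Let l/k be a finite Galois extension of fields, let G be a finite group with a cyclic normal subgroup I such that G/I ≅ Gal(l/k), and let V be a one-dimensional l-vector space on which G acts semilinearly (for g ∈ G, λ ∈ l, v, w ∈ V: g.(λv + w) = ḡ(λ)(g.v) + g.w, where ḡ is the image of g in Gal(l/k)). If Gal(l/k) is abelian, then Ind_I^G Res_I^G (V) ≅ ⊕^{(G:I)} V as k[G]-modules. -/
universe u

open Function

section Induction

variable {k : Type u} [Field k] {G : Type u} [Group G] (I : Subgroup G)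
  {V : Type u} [AddCommGroup V] [Module k V] (σ : Representation k (↥I) V)

/-- The underlying `k`-vector space of the induced representation `Ind_I^G V`:
the space of functions `f : G → V` with `f (i * g) = σ i (f g)` for `i ∈ I`.
(For finite groups this model of induction agrees with `k[G] ⊗_{k[I]} V`.) -/
def indCar : Submodule k (G → V) where
  carrier := { f | ∀ (i : ↥I) (g : G), f ((i : G) * g) = σ i (f g) }
  add_mem' := by
    intro a b ha hb i g
    simp [ha i g, hb i g]
  zero_mem' := by intro i g; simp
  smul_mem' := by
    intro c a ha i g
    simp [ha i g]

/-- The induced representation `Ind_I^G V` of `G`, where `G` acts by right translation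
of the argument. -/
def indRep : Representation k G ↥(indCar I σ) where
  toFun g :=
    { toFun := fun f => ⟨fun x => (f : G → V) (x * g), fun i x => by
        simpa [mul_assoc] using f.2 i (x * g)⟩
      map_add' := fun f₁ f₂ => rfl
      map_smul' := fun c f => rfl }
  map_one' := by
    ext f x
    simp
  map_mul' g h := by
    ext f x
    simp [mul_assoc]

end Induction

/-- **Statement 4** (Proposition 3.6 (a)): let `l/k` be a finite Galois extension, `G` a
finite group with a cyclic normal subgroup `I` such that `G/I ≅ Gal(l/k)` (via a surjection
`π : G → Gal(l/k)` with kernel `I`), and let `V` be a one-dimensional `l`-vector space on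
which `G` acts `k`-linearly and semilinearly (`g.(a • v) = π(g)(a) • g.v`).  If `Gal(l/k)`
is abelian, then `Ind_I^G Res_I^G V ≅ ⊕^{(G:I)} V` as `k[G]`-modules. -/
theorem ind_res_iso_of_abelian_galois
    (k l : Type u) [Field k] [Field l] [Algebra k l] [FiniteDimensional k l] [IsGalois k l]
    (G : Type u) [Group G] [Finite G] (I : Subgroup G) [I.Normal] [IsCyclic ↥I]
    (π : G →* (l ≃ₐ[k] l)) (hπ : Surjective π) (hker : π.ker = I)
    (V : Type u) [AddCommGroup V] [Module k V] [Module l V] [IsScalarTower k l V]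
    (hV : Module.finrank l V = 1)
    (ρ : Representation k G V)
    (hsemi : ∀ (g : G) (a : l) (v : V), ρ g (a • v) = (π g a) • (ρ g v))
    (habel : ∀ σ τ : (l ≃ₐ[k] l), σ * τ = τ * σ) :
    ∃ e : ↥(indCar I (ρ.comp I.subtype)) ≃ₗ[k] (Fin I.index → V),
      ∀ (g : G) (f : ↥(indCar I (ρ.comp I.subtype))) (j : Fin I.index),
        e (indRep I (ρ.comp I.subtype) g f) j = ρ g (e f j) := by
  classical
  set Γ := l ≃ₐ[k] l with hΓ
  haveI : FiniteDimensional l V := FiniteDimensional.of_finrank_eq_succ (n := 0) (by simpa using hV)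
  haveI : FiniteDimensional k V := Module.Finite.trans l V
  haveI : SMulCommClass k l V := ⟨fun c a v => by
    rw [← algebraMap_smul l c v, ← algebraMap_smul l c (a • v), smul_smul, smul_smul, mul_comm]⟩
  -- a section of π
  choose s hs using hπ
  -- basic computation rule for ρ
  have hmul : ∀ (a b : G) (v : V), ρ a (ρ b v) = ρ (a * b) v := fun a b v => by
    rw [map_mul]; rfl
  have hmem : ∀ (f : ↥(indCar I (ρ.comp I.subtype))) (i x : G), i ∈ I →
      (f : G → V) (i * x) = ρ i ((f : G → V) x) := fun f i x hi => f.2 ⟨i, hi⟩ x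
  -- the evaluation equivalence A
  let Amap : ↥(indCar I (ρ.comp I.subtype)) →ₗ[k] (Γ → V) :=
    { toFun := fun f γ => ρ (s γ)⁻¹ ((f : G → V) (s γ))
      map_add' := fun f g => by funext γ; simp
      map_smul' := fun c f => by funext γ; simp }
  let Ainv : (Γ → V) →ₗ[k] ↥(indCar I (ρ.comp I.subtype)) :=
    { toFun := fun h => ⟨fun x => ρ x (h (π x)), by
        intro i x
        have h1 : π ((i : G) * x) = π x := by
          have : π (i : G) = 1 := by
            have hiK : (i : G) ∈ π.ker := by rw [hker]; exact i.2
            rwa [MonoidHom.mem_ker] at hiK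
          rw [map_mul, this, one_mul]
        show ρ ((i : G) * x) (h (π ((i : G) * x))) = ρ (i : G) (ρ x (h (π x)))
        rw [h1, hmul]⟩
      map_add' := fun a b => Subtype.ext (funext fun x => by simp)
      map_smul' := fun c a => Subtype.ext (funext fun x => by simp) }
  let Aequiv : ↥(indCar I (ρ.comp I.subtype)) ≃ₗ[k] (Γ → V) :=
    LinearEquiv.ofLinear Amap Ainv
      (by
        refine LinearMap.ext fun h => funext fun γ => ?_
        show ρ (s γ)⁻¹ (ρ (s γ) (h (π (s γ)))) = h γ
        rw [hs γ, hmul, inv_mul_cancel, map_one, Module.End.one_apply])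
      (by
        refine LinearMap.ext fun f => Subtype.ext (funext fun x => ?_)
        show ρ x (ρ (s (π x))⁻¹ ((f : G → V) (s (π x)))) = (f : G → V) x
        rw [hmul]
        have hi : x * (s (π x))⁻¹ ∈ I := by
          rw [← hker, MonoidHom.mem_ker, map_mul, map_inv, hs, mul_inv_cancel]
        have := hmem f _ (s (π x)) hi
        rw [inv_mul_cancel_right] at this
        exact this.symm)
  -- a k-basis of l indexed by the Galois group
  have hcardΓ : Fintype.card Γ = Module.finrank k l := by
    rw [← Nat.card_eq_fintype_card]; exact IsGalois.card_aut_eq_finrank k l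
  let θB : Module.Basis Γ k l :=
    (Module.finBasis k l).reindex (Fintype.equivFinOfCardEq hcardΓ).symm
  -- the twisting map B
  let Bmap : (Γ → V) →ₗ[k] (Γ → V) :=
    { toFun := fun h τ => ∑ σ : Γ, σ⁻¹ (θB τ) • h σ
      map_add' := fun a b => by
        funext τ
        simp [smul_add, Finset.sum_add_distrib]
      map_smul' := fun c a => by
        funext τ
        simp only [Pi.smul_apply, RingHom.id_apply, Finset.smul_sum]
        exact Finset.sum_congr rfl fun σ _ => (smul_comm c _ _).symm }
  have binj : Function.Injective Bmap := by
    refine (injective_iff_map_eq_zero Bmap).2 fun h hh => ?_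
    let bV : Module.Basis (Fin 1) l V := Module.finBasisOfFinrankEq l V hV
    have hrow : ∀ τ : Γ, ∑ σ : Γ, σ⁻¹ (θB τ) * bV.repr (h σ) 0 = 0 := by
      intro τ
      have h0 : ∑ σ : Γ, σ⁻¹ (θB τ) • h σ = 0 := congrFun hh τ
      have h1 := congrArg (fun v => bV.repr v 0) h0
      simpa [map_sum, Finsupp.smul_apply, smul_eq_mul] using h1
    let Flin : l →ₗ[k] l := ∑ σ : Γ, bV.repr (h σ) 0 • (σ⁻¹ : Γ).toLinearMap
    have hF : Flin = 0 := θB.ext fun τ => by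
      show (∑ σ : Γ, bV.repr (h σ) 0 • (σ⁻¹ : Γ).toLinearMap) (θB τ) = (0 : l →ₗ[k] l) (θB τ)
      rw [LinearMap.sum_apply, LinearMap.zero_apply]
      rw [show ∑ σ : Γ, (bV.repr (h σ) 0 • (σ⁻¹ : Γ).toLinearMap) (θB τ)
            = ∑ σ : Γ, σ⁻¹ (θB τ) * bV.repr (h σ) 0 from
          Finset.sum_congr rfl fun σ _ => by
            rw [LinearMap.smul_apply, AlgEquiv.toLinearMap_apply, smul_eq_mul, mul_comm]]
      exact hrow τ
    have hinj : Function.Injective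
        (fun σ : Γ => ((σ⁻¹ : Γ) : l →* l)) := by
      intro a b hab
      have h2 : (a⁻¹ : Γ) = (b⁻¹ : Γ) := AlgEquiv.ext fun x => by
        have := congrArg (fun F : l →* l => F x) hab
        simpa using this
      exact inv_injective h2
    have hli : LinearIndependent l
        (fun σ : Γ => (((σ⁻¹ : Γ) : l →* l) : l → l)) :=
      (linearIndependent_monoidHom l l).comp _ hinj
    have hc0 : ∀ σ : Γ, bV.repr (h σ) 0 = 0 := by
      refine Fintype.linearIndependent_iff.mp hli (fun σ => bV.repr (h σ) 0) ?_
      funext y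
      have h3 := congrArg (fun F : l →ₗ[k] l => F y) hF
      simp only [LinearMap.sum_apply, LinearMap.smul_apply, AlgEquiv.toLinearMap_apply,
        LinearMap.zero_apply, smul_eq_mul, Flin] at h3
      simpa [Finset.sum_apply, smul_eq_mul] using h3
    funext σ
    have h4 := bV.sum_repr (h σ)
    rw [Fin.sum_univ_one] at h4
    rw [← h4, hc0 σ, zero_smul]
    rfl
  have bsurj : Function.Surjective Bmap := LinearMap.injective_iff_surjective.1 binj
  let Bequiv : (Γ → V) ≃ₗ[k] (Γ → V) := LinearEquiv.ofBijective Bmap ⟨binj, bsurj⟩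
  -- index equivalence
  have e1 : (G ⧸ I) ≃* Γ :=
    (QuotientGroup.quotientMulEquivOfEq hker.symm).trans
      (QuotientGroup.quotientKerEquivOfSurjective π (fun γ => ⟨s γ, hs γ⟩))
  have hidx : Fintype.card Γ = I.index := by
    rw [← Nat.card_eq_fintype_card, ← Nat.card_congr e1.toEquiv, Subgroup.index_eq_card]
  let bE : Fin I.index ≃ Γ := (Fintype.equivFinOfCardEq hidx).symm
  refine ⟨Aequiv.trans (Bequiv.trans (LinearEquiv.funCongrLeft k V bE)), ?_⟩
  intro g f j
  have key : ∀ τ : Γ, Bmap (Amap (indRep I (ρ.comp I.subtype) g f)) τ = ρ g (Bmap (Amap f) τ) := by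
    intro τ
    show (∑ σ : Γ, σ⁻¹ (θB τ) • ρ (s σ)⁻¹ ((f : G → V) (s σ * g)))
        = ρ g (∑ σ : Γ, σ⁻¹ (θB τ) • ρ (s σ)⁻¹ ((f : G → V) (s σ)))
    rw [map_sum]
    have hterm : ∀ σ : Γ,
        σ⁻¹ (θB τ) • ρ (s σ)⁻¹ ((f : G → V) (s σ * g))
          = (π g) ((σ * π g)⁻¹ (θB τ)) • ρ g (ρ (s (σ * π g))⁻¹ ((f : G → V) (s (σ * π g)))) := by
      intro σ
      have hsc : (π g) ((σ * π g)⁻¹ (θB τ)) = σ⁻¹ (θB τ) := by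
        rw [mul_inv_rev, AlgEquiv.mul_apply, ← AlgEquiv.mul_apply (π g) (π g)⁻¹,
          mul_inv_cancel, AlgEquiv.one_apply]
      have hIv : s σ * g * (s (σ * π g))⁻¹ ∈ I := by
        rw [← hker, MonoidHom.mem_ker, map_mul, map_mul, map_inv, hs, hs, mul_inv_cancel]
      have hfv : (f : G → V) (s σ * g) = ρ (s σ * g * (s (σ * π g))⁻¹) ((f : G → V) (s (σ * π g))) := by
        have h5 := hmem f _ (s (σ * π g)) hIv
        rwa [inv_mul_cancel_right] at h5
      rw [hsc, hfv, hmul, hmul]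
      have harg : (s σ)⁻¹ * (s σ * g * (s (σ * π g))⁻¹) = g * (s (σ * π g))⁻¹ := by group
      rw [harg]
    calc (∑ σ : Γ, σ⁻¹ (θB τ) • ρ (s σ)⁻¹ ((f : G → V) (s σ * g)))
        = ∑ σ : Γ, (π g) ((σ * π g)⁻¹ (θB τ)) • ρ g (ρ (s (σ * π g))⁻¹ ((f : G → V) (s (σ * π g)))) :=
          Finset.sum_congr rfl fun σ _ => hterm σ
      _ = ∑ σ : Γ, (π g) (σ⁻¹ (θB τ)) • ρ g (ρ (s σ)⁻¹ ((f : G → V) (s σ))) :=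
          Fintype.sum_equiv (Equiv.mulRight (π g)) _ _ (fun σ => rfl)
      _ = ∑ σ : Γ, ρ g (σ⁻¹ (θB τ) • ρ (s σ)⁻¹ ((f : G → V) (s σ))) :=
          Finset.sum_congr rfl fun σ _ => (hsemi g _ _).symm
  show (LinearEquiv.funCongrLeft k V bE) (Bequiv (Aequiv (indRep I (ρ.comp I.subtype) g f))) j
      = ρ g ((LinearEquiv.funCongrLeft k V bE) (Bequiv (Aequiv f)) j)
  show Bmap (Amap (indRep I (ρ.comp I.subtype) g f)) (bE j) = ρ g (Bmap (Amap f) (bE j))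
  exact key (bE j)
end

section
/- Let l/k be a finite Galois extension of fields, let G be a finite group with a cyclic normal subgroup I such that G/I ≅ Gal(l/k), and let V be a one-dimensional l-vector space on which G acts semilinearly. If I is central in G, then the roots of unity through which I acts on V all lie in k, and there is a one-dimensional k-representation χ of I such that Res_I^G(V) ≅ ⊕^{(G:I)} χ as k[I]-modules. -/
universe u

open Function

/-- Proposition 3.6 (b), first part: let `l/k` be a finite Galois
extension, `G` a finite group with a cyclic normal subgroup `I` such that
`G/I ≅ Gal(l/k)`, and `V` a one-dimensional `l`-vector space with a semilinear
`G`-action.  If `I` is central in `G`, then the roots of unity through which `I` acts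
on `V` all lie in `k`, and there is a one-dimensional `k`-representation `χ` of `I`
such that `Res_I^G V ≅ ⊕^{(G:I)} χ` as `k[I]`-modules. -/
theorem res_iso_of_central_inertia
    (k l : Type u) [Field k] [Field l] [Algebra k l] [FiniteDimensional k l] [IsGalois k l]
    (G : Type u) [Group G] [Finite G] (I : Subgroup G) [I.Normal] [IsCyclic ↥I]
    (π : G →* (l ≃ₐ[k] l)) (hπ : Surjective π) (hker : π.ker = I)
    (V : Type u) [AddCommGroup V] [Module k V] [Module l V] [IsScalarTower k l V]
    (hV : Module.finrank l V = 1)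
    (ρ : Representation k G V)
    (hsemi : ∀ (g : G) (a : l) (v : V), ρ g (a • v) = (π g a) • (ρ g v))
    (hcentral : I ≤ Subgroup.center G) :
    (∀ i : ↥I, ∃ c : k, c ^ Nat.card ↥I = 1 ∧
        ∀ v : V, ρ (i : G) v = algebraMap k l c • v) ∧
    (∃ χ : ↥I →* kˣ, ∃ e : V ≃ₗ[k] (Fin I.index → k),
        ∀ (i : ↥I) (v : V) (j : Fin I.index),
          e (ρ (i : G) v) j = (χ i : k) * e v j) := by
  classical
  obtain ⟨v₀, hv₀, hspan⟩ := (finrank_eq_one_iff' (K := l) (V := V)).mp hV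
  -- elements of I are in the kernel of π
  have hπI : ∀ i : ↥I, π (i : G) = 1 := fun i => by
    rw [← MonoidHom.mem_ker, hker]; exact i.2
  have hlin : ∀ (i : ↥I) (a : l) (v : V), ρ (i : G) (a • v) = a • ρ (i : G) v := by
    intro i a v; rw [hsemi, hπI]; rfl
  -- cancellation
  have hcancel : ∀ (w : V), w ≠ 0 → ∀ a b : l, a • w = b • w → a = b := by
    intro w hw a b hab
    have : (a - b) • w = 0 := by rw [sub_smul, hab, sub_self]
    rcases smul_eq_zero.mp this with h | h
    · exact sub_eq_zero.mp h
    · exact absurd h hw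
  -- the scalar through which i acts
  choose c hc using fun i : ↥I => hspan (ρ (i : G) v₀)
  have key : ∀ (i : ↥I) (v : V), ρ (i : G) v = c i • v := by
    intro i v
    obtain ⟨a, ha⟩ := hspan v
    rw [← ha, hlin, ← hc i, smul_smul, smul_smul, mul_comm]
  -- c is a monoid hom
  have hmul : ∀ i j : ↥I, c (i * j) = c i * c j := by
    intro i j
    refine hcancel v₀ hv₀ _ _ ?_
    rw [← key (i * j) v₀]
    have hco : ((i * j : ↥I) : G) = (i : G) * (j : G) := rfl
    rw [hco, map_mul]
    simp only [Module.End.mul_apply]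
    rw [key i, key j, smul_smul]
  have hone : c 1 = 1 := by
    refine hcancel v₀ hv₀ _ _ ?_
    rw [← key 1 v₀]
    simp
  let ψ : ↥I →* l := ⟨⟨c, hone⟩, hmul⟩
  -- ρ g w ≠ 0 for w ≠ 0
  have hρne : ∀ (g : G) (w : V), w ≠ 0 → ρ g w ≠ 0 := by
    intro g w hw h0
    apply hw
    have : ρ g⁻¹ (ρ g w) = w := by
      rw [← Module.End.mul_apply, ← map_mul, inv_mul_cancel, map_one]; rfl
    rw [h0, map_zero] at this
    exact this.symm
  -- c i is fixed by the Galois group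
  have hfix : ∀ (i : ↥I) (σ : l ≃ₐ[k] l), σ (c i) = c i := by
    intro i σ
    obtain ⟨g, rfl⟩ := hπ σ
    have hcomm : (i : G) * g = g * (i : G) := (Subgroup.mem_center_iff.mp (hcentral i.2) g).symm
    have h1 : ρ g (ρ (i : G) v₀) = (π g) (c i) • ρ g v₀ := by
      rw [key i v₀, hsemi]
    have h2 : ρ (i : G) (ρ g v₀) = c i • ρ g v₀ := key i _
    have h3 : ρ g (ρ (i : G) v₀) = ρ (i : G) (ρ g v₀) := by
      rw [← Module.End.mul_apply, ← Module.End.mul_apply, ← map_mul, ← map_mul, hcomm]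
    rw [h3, h2] at h1
    exact hcancel _ (hρne g v₀ hv₀) _ _ h1.symm
  -- hence c i is in the base field
  have hbot : ∀ i : ↥I, ∃ c' : k, algebraMap k l c' = c i := by
    intro i
    have hmem : c i ∈ IntermediateField.fixedField (⊤ : Subgroup (l ≃ₐ[k] l)) := by
      intro σ; exact hfix i σ
    have : IntermediateField.fixedField (⊤ : Subgroup (l ≃ₐ[k] l)) = ⊥ :=
      OrderIso.map_bot (IsGalois.intermediateFieldEquivSubgroup (F := k) (E := l)).symm
    rw [this, IntermediateField.mem_bot] at hmem
    exact hmem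
  choose c' hc' using hbot
  have hinj : Injective (algebraMap k l) := (algebraMap k l).injective
  have hmul' : ∀ i j : ↥I, c' (i * j) = c' i * c' j := by
    intro i j; apply hinj; rw [map_mul, hc', hc', hc', hmul]
  have hone' : c' 1 = 1 := by apply hinj; rw [hc', hone, map_one]
  let ψk : ↥I →* k := ⟨⟨c', hone'⟩, hmul'⟩
  have hpow : ∀ i : ↥I, c' i ^ Nat.card ↥I = 1 := by
    intro i
    have : c' (i ^ Nat.card ↥I) = c' i ^ Nat.card ↥I := map_pow ψk i _
    rw [pow_card_eq_one'] at this
    rw [← this, hone']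
  have hact : ∀ (i : ↥I) (v : V), ρ (i : G) v = algebraMap k l (c' i) • v := by
    intro i v; rw [key, hc']
  refine ⟨fun i => ⟨c' i, hpow i, hact i⟩, ?_⟩
  -- second part
  have hdim : Module.finrank k V = I.index := by
    have h1 : FiniteDimensional l V := Module.finite_of_finrank_eq_succ (n := 0) hV
    have h2 : Module.finrank k l * Module.finrank l V = Module.finrank k V :=
      Module.finrank_mul_finrank k l V
    have h3 : I.index = Nat.card (l ≃ₐ[k] l) := by
      unfold Subgroup.index
      rw [← hker]
      exact Nat.card_congr (QuotientGroup.quotientKerEquivOfSurjective π hπ).toEquiv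
    have h4 : Nat.card (l ≃ₐ[k] l) = Module.finrank k l := by
      exact IsGalois.card_aut_eq_finrank k l
    rw [h3, h4, ← h2, hV, mul_one]
  have hfinkV : FiniteDimensional k V := by
    have h1 : FiniteDimensional l V := Module.finite_of_finrank_eq_succ (n := 0) hV
    exact Module.Finite.trans l V
  let b : Module.Basis (Fin I.index) k V := Module.finBasisOfFinrankEq k V hdim
  refine ⟨ψk.toHomUnits, b.equivFun, ?_⟩
  intro i v j
  rw [hact i v, algebraMap_smul, map_smul]
  simp only [Pi.smul_apply, smul_eq_mul]
  rfl
end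

section
/- Let X be a scheme of finite type over a perfect field k and let Ω_{X/k} be the sheaf of relative differentials of X over k. Then for every closed point P of X, the canonical map m_P/m_P² → Ω_{X/k}(P) is an isomorphism. -/
universe u

open AlgebraicGeometry CategoryTheory IsLocalRing

open scoped TensorProduct

/-- The `k`-algebra structure on the stalks of a scheme over `Spec k`. -/
noncomputable def stalkAlgebra (k : Type u) [Field k] (X : Scheme.{u})
    (f : X ⟶ Spec (CommRingCat.of k)) (P : X) : Algebra k (X.presheaf.stalk P) :=
  RingHom.toAlgebra
    ((Scheme.ΓSpecIso (CommRingCat.of k)).inv ≫ f.appTop ≫ X.presheaf.Γgerm P).hom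

section CotangentMap

variable (k S : Type u) [CommRing k] [CommRing S] [IsLocalRing S] [Algebra k S]

/-- The `S`-linear map `m → S/m ⊗_S Ω_{S/k}`, `x ↦ 1 ⊗ dx`. -/
noncomputable def maximalIdealToOmegaFibre :
    ↥(maximalIdeal S) →ₗ[S] (ResidueField S) ⊗[S] (Ω[S⁄k]) where
  toFun x := (1 : ResidueField S) ⊗ₜ[S] (KaehlerDifferential.D k S (x : S))
  map_add' x y := by simp [TensorProduct.tmul_add]
  map_smul' s x := by
    have hx : ((s • x : ↥(maximalIdeal S)) : S) = s * (x : S) := rfl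
    have h0 : ((x : S) • ((1 : ResidueField S) ⊗ₜ[S] (KaehlerDifferential.D k S s))
        : (ResidueField S) ⊗[S] (Ω[S⁄k])) = 0 := by
      rw [TensorProduct.smul_tmul']
      have h1 : ((x : S) • (1 : ResidueField S)) = 0 := by
        rw [Algebra.smul_def, mul_one]
        exact Ideal.Quotient.eq_zero_iff_mem.mpr x.2
      rw [h1, TensorProduct.zero_tmul]
    simp only [hx, Derivation.leibniz, TensorProduct.tmul_add, TensorProduct.tmul_smul,
      RingHom.id_apply, h0, add_zero]

/-- The canonical map `m/m² → Ω_{S/k}(P) = Ω_{S/k} ⊗_S S/m` for a local `k`-algebra `S`,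
induced by `x ↦ dx ⊗ 1`. -/
noncomputable def cotangentToOmegaFibre :
    (maximalIdeal S).Cotangent →ₗ[S] (ResidueField S) ⊗[S] (Ω[S⁄k]) :=
  Submodule.liftQ _ (maximalIdealToOmegaFibre k S)
    (by
      refine Submodule.smul_le.mpr ?_
      intro s hs x _
      rw [LinearMap.mem_ker, map_smul]
      show s • ((1 : ResidueField S) ⊗ₜ[S] (KaehlerDifferential.D k S (x : S))) = 0
      rw [TensorProduct.smul_tmul']
      have h1 : (s • (1 : ResidueField S)) = 0 := by
        rw [Algebra.smul_def, mul_one]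
        exact Ideal.Quotient.eq_zero_iff_mem.mpr hs
      rw [h1, TensorProduct.zero_tmul])

end CotangentMap

theorem key_bijective (k S : Type u) [Field k] [CommRing S] [IsLocalRing S] [Algebra k S]
    [Algebra.IsSeparable k (ResidueField S)] :
    Function.Bijective (cotangentToOmegaFibre k S) := by
  haveI : IsScalarTower k S (ResidueField S) := IsScalarTower.of_algebraMap_eq' rfl
  haveI : Algebra.FormallyEtale k (ResidueField S) :=
    Algebra.FormallyEtale.of_isSeparable k (ResidueField S)
  have hs : Function.Surjective (algebraMap S (ResidueField S)) :=
    Ideal.Quotient.mk_surjective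
  have hker : RingHom.ker (algebraMap S (ResidueField S)) = maximalIdeal S := by
    rw [IsLocalRing.ResidueField.algebraMap_eq, IsLocalRing.ker_residue]
  -- the map `cotangentToOmegaFibre` on generators
  have hgen : ∀ (a : S) (ha : a ∈ maximalIdeal S),
      cotangentToOmegaFibre k S ((maximalIdeal S).toCotangent ⟨a, ha⟩)
        = (1 : ResidueField S) ⊗ₜ[S] (KaehlerDifferential.D k S a) := fun a ha => rfl
  -- injectivity of `kerCotangentToTensor` via a retraction coming from formal smoothness
  obtain ⟨g, hg⟩ : ∃ g : ResidueField S →ₐ[k]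
        (S ⧸ RingHom.ker (algebraMap S (ResidueField S)) ^ 2),
      (IsScalarTower.toAlgHom k S (ResidueField S)).kerSquareLift.comp g
        = AlgHom.id k (ResidueField S) := by
    have hsurj : Function.Surjective
        (IsScalarTower.toAlgHom k S (ResidueField S)).kerSquareLift := by
      intro x
      obtain ⟨y, hy⟩ := hs x
      exact ⟨Ideal.Quotient.mk _ y, hy⟩
    have hnil : IsNilpotent (RingHom.ker
        (IsScalarTower.toAlgHom k S (ResidueField S)).kerSquareLift.toRingHom) := by
      refine ⟨2, ?_⟩
      rw [AlgHom.ker_kerSquareLift]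
      exact Ideal.cotangentIdeal_square _
    exact ⟨Algebra.FormallySmooth.liftOfSurjective (AlgHom.id k (ResidueField S))
        (IsScalarTower.toAlgHom k S (ResidueField S)).kerSquareLift hsurj hnil,
      Algebra.FormallySmooth.comp_liftOfSurjective _ _ hsurj hnil⟩
  obtain ⟨l, hl⟩ := (retractionKerCotangentToTensorEquivSection (R := k) hs).symm ⟨g, hg⟩
  have hinj : Function.Injective (KaehlerDifferential.kerCotangentToTensor k S (ResidueField S)) := by
    intro x y hxy
    have := congrArg l hxy
    rwa [show l (KaehlerDifferential.kerCotangentToTensor k S (ResidueField S) x)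
        = x from LinearMap.congr_fun hl x,
      show l (KaehlerDifferential.kerCotangentToTensor k S (ResidueField S) y)
        = y from LinearMap.congr_fun hl y] at this
  constructor
  · -- injectivity
    rw [injective_iff_map_eq_zero]
    intro z hz
    obtain ⟨⟨a, ha⟩, rfl⟩ := (maximalIdeal S).toCotangent_surjective z
    have ha' : a ∈ RingHom.ker (algebraMap S (ResidueField S)) := hker ▸ ha
    have h0 : KaehlerDifferential.kerCotangentToTensor k S (ResidueField S)
        ((RingHom.ker (algebraMap S (ResidueField S))).toCotangent ⟨a, ha'⟩) = 0 := by
      rw [KaehlerDifferential.kerCotangentToTensor_toCotangent]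
      rw [hgen a ha] at hz
      exact hz
    have := hinj (by rw [h0, map_zero] :
      KaehlerDifferential.kerCotangentToTensor k S (ResidueField S)
        ((RingHom.ker (algebraMap S (ResidueField S))).toCotangent ⟨a, ha'⟩)
        = KaehlerDifferential.kerCotangentToTensor k S (ResidueField S) 0)
    rw [Ideal.toCotangent_eq_zero] at this ⊢
    show a ∈ maximalIdeal S ^ 2
    rw [← hker]
    exact this
  · -- surjectivity
    intro y
    have hy : KaehlerDifferential.mapBaseChange k S (ResidueField S) y = 0 :=
      Subsingleton.elim _ _
    obtain ⟨x, hx⟩ := (KaehlerDifferential.exact_kerCotangentToTensor_mapBaseChange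
      k S (ResidueField S) hs y).mp hy
    obtain ⟨⟨a, ha⟩, rfl⟩ := Ideal.toCotangent_surjective _ x
    refine ⟨(maximalIdeal S).toCotangent ⟨a, hker ▸ ha⟩, ?_⟩
    rw [hgen]
    rw [KaehlerDifferential.kerCotangentToTensor_toCotangent] at hx
    exact hx

set_option maxHeartbeats 1000000 in
/-- **Statement 9** (Proposition 1.5): let `X` be a scheme of finite type over a perfect
field `k` and let `Ω_{X/k}` be the sheaf of relative differentials.  For every closed
point `P` of `X`, the canonical map `m_P/m_P² → Ω_{X/k}(P)` is an isomorphism.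
(The fibre of `Ω_{X/k}` at `P` is canonically `Ω_{O_{X,P}/k} ⊗ k(P)`.) -/
theorem cotangentSpace_iso_omega_fibre (k : Type u) [Field k] [PerfectField k]
    (X : Scheme.{u}) (f : X ⟶ Spec (CommRingCat.of k))
    [LocallyOfFiniteType f] [QuasiCompact f]
    (P : X) (hP : IsClosed ({P} : Set X)) :
    letI := stalkAlgebra k X f P
    Function.Bijective (cotangentToOmegaFibre k (X.presheaf.stalk P)) := by
  letI := stalkAlgebra k X f P
  -- choose an affine open neighbourhood of `P`
  obtain ⟨U, hPU⟩ : ∃ U : X.affineOpens, P ∈ U.1 := by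
    obtain ⟨_, ⟨V, hV, rfl⟩, hxV, -⟩ := X.isBasis_affineOpens.exists_subset_of_mem_open
      (Set.mem_univ P) isOpen_univ
    exact ⟨⟨V, hV⟩, hxV⟩
  have hU := U.2
  letI : Algebra Γ(X, U.1) (X.presheaf.stalk P) :=
    TopCat.Presheaf.algebra_section_stalk X.presheaf ⟨P, hPU⟩
  haveI hloc : IsLocalization.AtPrime (X.presheaf.stalk P)
      (hU.primeIdealOf ⟨P, hPU⟩).asIdeal := hU.isLocalization_stalk ⟨P, hPU⟩
  set p := hU.primeIdealOf ⟨P, hPU⟩ with hpdef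
  -- `p` is a maximal ideal since `P` is a closed point
  have hmax : p.asIdeal.IsMaximal := by
    rw [← PrimeSpectrum.isClosed_singleton_iff_isMaximal]
    have hemb := by haveI := IsAffineOpen.isOpenImmersion_fromSpec hU; exact hU.fromSpec.isOpenEmbedding
    have hsing : ({p} : Set (PrimeSpectrum Γ(X, U.1))) = hU.fromSpec.base ⁻¹' {P} := by
      ext q
      simp only [Set.mem_singleton_iff, Set.mem_preimage]
      constructor
      · rintro rfl
        exact hU.fromSpec_primeIdealOf ⟨P, hPU⟩
      · intro hq
        refine hemb.injective ?_
        rw [hq, hU.fromSpec_primeIdealOf ⟨P, hPU⟩]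
    rw [hsing]
    exact hP.preimage hU.fromSpec.base.hom.continuous
  -- the composite ring hom `Γ(X, U) → κ(P)` is surjective
  set φ : Γ(X, U.1) →+* ResidueField (X.presheaf.stalk P) :=
    (IsLocalRing.residue (X.presheaf.stalk P)).comp (algebraMap Γ(X, U.1) (X.presheaf.stalk P)) with hφdef
  have hφp : ∀ a ∈ p.asIdeal, φ a = 0 := by
    intro a ha
    have : algebraMap Γ(X, U.1) (X.presheaf.stalk P) a ∈ maximalIdeal (X.presheaf.stalk P) :=
      (IsLocalization.AtPrime.to_map_mem_maximal_iff (X.presheaf.stalk P) p.asIdeal a).mpr ha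
    simpa [hφdef] using (IsLocalRing.residue_eq_zero_iff _).mpr this
  have hφsurj : Function.Surjective φ := by
    intro y
    obtain ⟨x, rfl⟩ := IsLocalRing.residue_surjective y
    obtain ⟨⟨a, s⟩, hx⟩ := IsLocalization.surj (M := p.asIdeal.primeCompl) x
    obtain ⟨b, i, hi, hbi⟩ := hmax.exists_inv s.2
    refine ⟨a * b, ?_⟩
    have h1 : φ (s.1 * b) = 1 := by
      have : (s.1 : Γ(X, U.1)) * b = 1 - i := by
        rw [eq_sub_iff_add_eq, mul_comm]
        exact hbi
      rw [this, map_sub, map_one, hφp i hi, sub_zero]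
    have h2 : φ a = IsLocalRing.residue (X.presheaf.stalk P) x * φ s.1 := by
      rw [hφdef]
      simp only [RingHom.comp_apply]
      rw [← hx, map_mul]
    calc φ (a * b) = IsLocalRing.residue (X.presheaf.stalk P) x * (φ s.1 * φ b) := by
          rw [map_mul, h2]; ring
      _ = IsLocalRing.residue (X.presheaf.stalk P) x := by rw [← map_mul, h1, mul_one]
  -- `Γ(X, U)` is a finite type `k`-algebra
  have e : U.1 ≤ f ⁻¹ᵁ ⊤ := le_top
  have hFT1 : RingHom.FiniteType (f.appLE ⊤ U.1 e).hom :=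
    f.finiteType_appLE (isAffineOpen_top _) U.2 e
  have hFT2 : RingHom.FiniteType (Scheme.ΓSpecIso (CommRingCat.of k)).inv.hom :=
    RingHom.FiniteType.of_surjective _
      (ConcreteCategory.bijective_of_isIso (Scheme.ΓSpecIso (CommRingCat.of k)).inv).2
  set g₁ : CommRingCat.of k ⟶ Γ(X, U.1) :=
    (Scheme.ΓSpecIso (CommRingCat.of k)).inv ≫ f.appLE ⊤ U.1 e with hg₁def
  have hFTg₁ : RingHom.FiniteType g₁.hom := hFT1.comp hFT2
  -- identify the algebra map `k → κ(P)` with `φ ∘ g₁`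
  have hres : f.appLE ⊤ U.1 e ≫ X.presheaf.germ U.1 P hPU = f.appTop ≫ X.presheaf.Γgerm P := by
    rw [Scheme.Hom.appLE, Category.assoc, TopCat.Presheaf.germ_res]
    rfl
  have halgS : algebraMap k (X.presheaf.stalk P) = (g₁ ≫ X.presheaf.germ U.1 P hPU : CommRingCat.of k ⟶ _).hom := by
    rw [hg₁def, Category.assoc, hres]
    rfl
  haveI : IsScalarTower k (X.presheaf.stalk P) (ResidueField (X.presheaf.stalk P)) := IsScalarTower.of_algebraMap_eq' rfl
  have halg : algebraMap k (ResidueField (X.presheaf.stalk P)) = φ.comp g₁.hom := by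
    have h0 : algebraMap k (ResidueField (X.presheaf.stalk P))
        = (IsLocalRing.residue (X.presheaf.stalk P)).comp (algebraMap k (X.presheaf.stalk P)) := rfl
    refine RingHom.ext fun r => ?_
    have h1 := RingHom.congr_fun halgS r
    show IsLocalRing.residue (X.presheaf.stalk P) ((algebraMap k (X.presheaf.stalk P)) r)
        = IsLocalRing.residue (X.presheaf.stalk P) ((algebraMap Γ(X, U.1) (X.presheaf.stalk P)) (g₁.hom r))
    rw [h1]
    rfl
  -- hence `κ(P)` is a finite type `k`-algebra, so finite, algebraic, separable
  have hFTκ : RingHom.FiniteType (algebraMap k (ResidueField (X.presheaf.stalk P))) := by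
    rw [halg]
    exact (RingHom.FiniteType.of_surjective φ hφsurj).comp hFTg₁
  haveI : Algebra.FiniteType k (ResidueField (X.presheaf.stalk P)) := by
    have h' : @Algebra.FiniteType k (ResidueField (X.presheaf.stalk P)) _ _
        (algebraMap k (ResidueField (X.presheaf.stalk P))).toAlgebra := hFTκ
    have heq : (algebraMap k (ResidueField (X.presheaf.stalk P))).toAlgebra
        = (inferInstance : Algebra k (ResidueField (X.presheaf.stalk P))) :=
      Algebra.algebra_ext _ _ fun r => rfl
    rwa [heq] at h'
  haveI : Module.Finite k (ResidueField (X.presheaf.stalk P)) :=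
    finite_of_finite_type_of_isJacobsonRing k (ResidueField (X.presheaf.stalk P))
  haveI : Algebra.IsAlgebraic k (ResidueField (X.presheaf.stalk P)) := Algebra.IsAlgebraic.of_finite k _
  exact key_bijective k (X.presheaf.stalk P)
end
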